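/- Let X be a geodesic metric space that is (*)-asymptotically tree-graded with respect to a collection 𝓐 of subsets, such that (X,𝓐) satisfies property (α2) with constants ε ∈ (0,1/2), M > 0, and such that for each C the constant σ in the (*)-property is at least M. Then for every C ≥ 0 there exist κ ≥ 0 and λ ≥ 0 with the following property: for any two geodesics γ, γ′ with common origin γ₋ = γ′₋ and with dist(γ₊, γ′₊) ≤ C, every point z on γ′ either lies in N̄_κ(γ), or lies in N̄_κ(A) for some A ∈ 𝓐 such that N̄_κ(A) intersects γ; moreover, in the latter case, if e, f and e′, f′ denote the entrance and exit points of γ and of γ′ respectively from N̄_κ(A), then dist(e,e′) ≤ λ and dist(f,f′) ≤ λ. -/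

import Mathlib

open Set Metric

/-! ### Basic metric notions: tubular neighborhoods, geodesics -/

variable {X : Type*} [MetricSpace X]

/-- Open `δ`-tubular neighborhood of a subset. -/
def tubN (δ : ℝ) (A : Set X) : Set X := {x | Metric.infDist x A < δ}

/-- Closed `δ`-tubular neighborhood of a subset. -/
def ctubN (δ : ℝ) (A : Set X) : Set X := {x | Metric.infDist x A ≤ δ}

/-- `γ` parametrizes a geodesic of length `ℓ` (an isometric embedding of `[0,ℓ]`). -/
def IsGeodesicParam (γ : ℝ → X) (ℓ : ℝ) : Prop :=
  0 ≤ ℓ ∧ ∀ s ∈ Set.Icc (0:ℝ) ℓ, ∀ t ∈ Set.Icc (0:ℝ) ℓ, dist (γ s) (γ t) = |s - t|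

/-- A metric space is geodesic if every two points are joined by a geodesic. -/
def GeodesicSpace (X : Type*) [MetricSpace X] : Prop :=
  ∀ x y : X, ∃ (γ : ℝ → X) (ℓ : ℝ), IsGeodesicParam γ ℓ ∧ γ 0 = x ∧ γ ℓ = y

/-- The cyclic successor of an index in `Fin k`. -/
def finCycSucc {k : ℕ} (i : Fin k) : Fin k := ⟨(i.val + 1) % k, Nat.mod_lt _ i.pos⟩

/-! ### Polygons -/

/-- The data of a `k`-gon: `k` parametrized paths with their lengths. -/
structure PrePolygon (X : Type*) (k : ℕ) where
  edge : Fin k → ℝ → X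
  len : Fin k → ℝ

namespace PrePolygon

variable {k : ℕ}

/-- The `i`-th edge, as a subset. -/
def edgeSet (P : PrePolygon X k) (i : Fin k) : Set X := P.edge i '' Set.Icc 0 (P.len i)

/-- The polygon, as a subset (union of its edges). -/
def carrier (P : PrePolygon X k) : Set X := ⋃ i, P.edgeSet i

/-- The `i`-th vertex (the origin of the `i`-th edge). -/
def vertex (P : PrePolygon X k) (i : Fin k) : X := P.edge i 0

/-- The union `O_x` of the edges not adjacent to the `i`-th vertex. -/
def opp (P : PrePolygon X k) (i : Fin k) : Set X :=
  ⋃ j ∈ {j : Fin k | j ≠ i ∧ finCycSucc j ≠ i}, P.edgeSet j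

/-- The edges close up cyclically (the endpoint of each edge is the origin of the next). -/
def IsClosedPolygon (P : PrePolygon X k) : Prop :=
  (∀ i, 0 ≤ P.len i) ∧ ∀ i, P.edge i (P.len i) = P.edge (finCycSucc i) 0

/-- A geodesic `k`-gon. -/
def IsGeodesicPolygon (P : PrePolygon X k) : Prop :=
  P.IsClosedPolygon ∧ ∀ i, IsGeodesicParam (P.edge i) (P.len i)

/-- The polygon is `(θ,σ,ν)`-fat:  (F1) every point of an edge at distance at least `σθ`
from both endpoints of the edge is at distance at least `θ` from the rest of the polygon;
(F2) every vertex is at distance at least `νθ` from the union of the non-adjacent edges. -/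
def IsFat (P : PrePolygon X k) (θ σ ν : ℝ) : Prop :=
  (∀ i : Fin k, ∀ p ∈ P.edgeSet i,
      σ * θ ≤ dist p (P.edge i 0) → σ * θ ≤ dist p (P.edge i (P.len i)) →
      θ ≤ Metric.infDist p (P.carrier \ P.edgeSet i)) ∧
  (∀ i : Fin k, ν * θ ≤ Metric.infDist (P.vertex i) (P.opp i))

/-- `(θ,ν)`-fat means `(θ,2,ν)`-fat. -/
def IsFat2 (P : PrePolygon X k) (θ ν : ℝ) : Prop := P.IsFat θ 2 ν

end PrePolygon

/-! ### Gromov hyperbolicity (thin triangles) -/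

/-- A geodesic metric space is Gromov hyperbolic if there is `δ ≥ 0` such that every geodesic
triangle is `δ`-thin: each side lies in the closed `δ`-neighborhood of the other two sides. -/
def GromovHyperbolic (X : Type*) [MetricSpace X] : Prop :=
  ∃ δ : ℝ, 0 ≤ δ ∧ ∀ T : PrePolygon X 3, T.IsGeodesicPolygon →
    ∀ i : Fin 3, ∀ p ∈ T.edgeSet i,
      Metric.infDist p (T.edgeSet (finCycSucc i) ∪ T.edgeSet (finCycSucc (finCycSucc i))) ≤ δ

/-! ### The Druţu–Sapir properties of a pair `(X, 𝓐)` -/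

/-- Property (α₁): uniformly bounded intersections of tubular neighborhoods. -/
def Alpha1 (𝓐 : Set (Set X)) : Prop :=
  ∀ δ : ℝ, 0 < δ → ∃ D : ℝ, ∀ A ∈ 𝓐, ∀ A' ∈ 𝓐, A ≠ A' →
    ∀ x ∈ tubN δ A ∩ tubN δ A', ∀ y ∈ tubN δ A ∩ tubN δ A', dist x y ≤ D

/-- Property (α₂) with given constants `ε`, `M`. -/
def Alpha2With (𝓐 : Set (Set X)) (ε M : ℝ) : Prop :=
  ∀ (γ : ℝ → X) (ℓ : ℝ), IsGeodesicParam γ ℓ → ∀ A ∈ 𝓐,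
    γ 0 ∈ tubN (ε * ℓ) A → γ ℓ ∈ tubN (ε * ℓ) A →
    ∃ t ∈ Set.Icc (0:ℝ) ℓ, γ t ∈ tubN M A

/-- Property (α₂). -/
def Alpha2 (𝓐 : Set (Set X)) : Prop :=
  ∃ ε M : ℝ, 0 ≤ ε ∧ ε < 1/2 ∧ 0 < M ∧ Alpha2With 𝓐 ε M

/-- Property (α₃): fat geodesic `k`-gons lie in tubular neighborhoods of pieces. -/
def Alpha3 (𝓐 : Set (Set X)) : Prop :=
  ∀ k : ℕ, 2 ≤ k → ∃ θ : ℝ, 0 < θ ∧ ∃ ν : ℝ, 8 ≤ ν ∧ ∃ χ : ℝ, 0 < χ ∧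
    ∀ P : PrePolygon X k, P.IsGeodesicPolygon → P.IsFat2 θ ν →
      ∃ A ∈ 𝓐, P.carrier ⊆ tubN χ A

/-- Property (β₂) with given constants `ε`, `M`: middle thirds of geodesics with endpoints
close to a piece stay close to the piece. -/
def Beta2With (𝓐 : Set (Set X)) (ε M : ℝ) : Prop :=
  ∀ (γ : ℝ → X) (ℓ : ℝ), IsGeodesicParam γ ℓ → ∀ A ∈ 𝓐,
    γ 0 ∈ tubN (ε * ℓ) A → γ ℓ ∈ tubN (ε * ℓ) A →
    ∀ t ∈ Set.Icc (ℓ/3) (2*ℓ/3), γ t ∈ tubN M A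

/-- Property (β₂). -/
def Beta2 (𝓐 : Set (Set X)) : Prop := ∃ ε M : ℝ, 0 < ε ∧ 0 ≤ M ∧ Beta2With 𝓐 ε M

/-- Property (β₃) with given constants: fat geodesic hexagons lie in tubular
neighborhoods of pieces. -/
def Beta3With (𝓐 : Set (Set X)) (θ ν χ : ℝ) : Prop :=
  ∀ P : PrePolygon X 6, P.IsGeodesicPolygon → P.IsFat2 θ ν → ∃ A ∈ 𝓐, P.carrier ⊆ tubN χ A

/-- Property (β₃). -/
def Beta3 (𝓐 : Set (Set X)) : Prop :=
  ∃ θ : ℝ, 0 < θ ∧ ∃ ν : ℝ, 8 ≤ ν ∧ ∃ χ : ℝ, 0 < χ ∧ Beta3With 𝓐 θ ν χ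

/-- Property (Q), uniform quasi-convexity of pieces, with given constants `t`, `K₀`. -/
def PropQWith (𝓐 : Set (Set X)) (t K₀ : ℝ) : Prop :=
  ∀ A ∈ 𝓐, ∀ K : ℝ, K₀ ≤ K → ∀ (γ : ℝ → X) (ℓ : ℝ), IsGeodesicParam γ ℓ →
    γ 0 ∈ tubN K A → γ ℓ ∈ tubN K A → ∀ s ∈ Set.Icc (0:ℝ) ℓ, γ s ∈ tubN (t * K) A

/-- Property (Q), uniform quasi-convexity of pieces. -/
def PropQ (𝓐 : Set (Set X)) : Prop :=
  ∃ t : ℝ, 0 < t ∧ ∃ K₀ : ℝ, 0 ≤ K₀ ∧ PropQWith 𝓐 t K₀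

/-- `X` is asymptotically tree-graded with respect to `𝓐` (Druţu–Sapir metric
characterization, taken as the definition): (α₁), (α₂) and (α₃) hold. -/
def ATG (𝓐 : Set (Set X)) : Prop := Alpha1 𝓐 ∧ Alpha2 𝓐 ∧ Alpha3 𝓐

/-! ### Entrance and exit points, almost geodesics, the (*) property -/

/-- The entrance point of the path `p : [0,ℓ] → X` in the set `S`. -/
noncomputable def entrancePoint (p : ℝ → X) (ℓ : ℝ) (S : Set X) : X :=
  p (sInf {t | t ∈ Set.Icc (0:ℝ) ℓ ∧ p t ∈ S})

/-- The exit point of the path `p : [0,ℓ] → X` from the set `S`. -/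
noncomputable def exitPoint (p : ℝ → X) (ℓ : ℝ) (S : Set X) : X :=
  p (sSup {t | t ∈ Set.Icc (0:ℝ) ℓ ∧ p t ∈ S})

/-- `q` is a `(1,C)`-almost geodesic on `[0,ℓ]`: a `1`-Lipschitz `(1,C)`-quasi-geodesic. -/
def IsAlmostGeodesic (C : ℝ) (q : ℝ → X) (ℓ : ℝ) : Prop :=
  0 ≤ ℓ ∧ ∀ s ∈ Set.Icc (0:ℝ) ℓ, ∀ t ∈ Set.Icc (0:ℝ) ℓ,
    |s - t| - C ≤ dist (q s) (q t) ∧ dist (q s) (q t) ≤ |s - t|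

/-- The `(*)` alternative for triangles with `(1,C)`-almost geodesic edges,
with constants `σ`, `δ`. -/
def StarATGWith (𝓐 : Set (Set X)) (C σ δ : ℝ) : Prop :=
  ∀ T : PrePolygon X 3, T.IsClosedPolygon →
    (∀ i, IsAlmostGeodesic C (T.edge i) (T.len i)) →
    (∃ a : X, ∀ i : Fin 3, (Metric.closedBall a σ ∩ T.edgeSet i).Nonempty) ∨
    (∃ A ∈ 𝓐, (∀ i : Fin 3, (ctubN σ A ∩ T.edgeSet i).Nonempty) ∧
      ∀ i : Fin 3, dist (exitPoint (T.edge i) (T.len i) (ctubN σ A))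
        (entrancePoint (T.edge (finCycSucc i)) (T.len (finCycSucc i)) (ctubN σ A)) < δ)

/-- `X` is `(*)`-asymptotically tree-graded with respect to `𝓐`. -/
def StarATG (𝓐 : Set (Set X)) : Prop :=
  ∀ C : ℝ, 0 ≤ C → ∃ σ δ : ℝ, StarATGWith 𝓐 C σ δ

section MyAux
variable {X : Type*} [MetricSpace X]

/-- The parameter hit-set of a path in a set. -/
def hitP (p : ℝ → X) (ℓ : ℝ) (S : Set X) : Set ℝ := {t | t ∈ Set.Icc (0:ℝ) ℓ ∧ p t ∈ S}

lemma hitP_subset (p : ℝ → X) (ℓ : ℝ) (S : Set X) : hitP p ℓ S ⊆ Set.Icc 0 ℓ := fun _ h => h.1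

lemma entrancePoint_eq (p : ℝ → X) (ℓ : ℝ) (S : Set X) :
    entrancePoint p ℓ S = p (sInf (hitP p ℓ S)) := rfl

lemma exitPoint_eq (p : ℝ → X) (ℓ : ℝ) (S : Set X) :
    exitPoint p ℓ S = p (sSup (hitP p ℓ S)) := rfl

lemma ctubN_mono {A : Set X} {r r' : ℝ} (h : r ≤ r') : ctubN r A ⊆ ctubN r' A :=
  fun _ hx => le_trans hx h

lemma isClosed_ctubN (r : ℝ) (A : Set X) : IsClosed (ctubN r A) :=
  isClosed_le (continuous_infDist_pt A) continuous_const

lemma cont_of_bound {p : ℝ → X} {ℓ : ℝ}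
    (h : ∀ s ∈ Set.Icc (0:ℝ) ℓ, ∀ u ∈ Set.Icc (0:ℝ) ℓ, dist (p s) (p u) ≤ |s - u|) :
    ContinuousOn p (Set.Icc 0 ℓ) :=
  (LipschitzOnWith.of_dist_le_mul (K := 1) (fun x hx y hy => by
    simpa [Real.dist_eq] using h x hx y hy)).continuousOn

lemma IsGeodesicParam.cont {γ : ℝ → X} {ℓ : ℝ} (h : IsGeodesicParam γ ℓ) :
    ContinuousOn γ (Set.Icc 0 ℓ) :=
  cont_of_bound (fun s hs u hu => le_of_eq (h.2 s hs u hu))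

lemma hitP_closed {p : ℝ → X} {ℓ : ℝ} {S : Set X} (hc : ContinuousOn p (Set.Icc 0 ℓ))
    (hS : IsClosed S) : IsClosed (hitP p ℓ S) := by
  have : hitP p ℓ S = Set.Icc 0 ℓ ∩ p ⁻¹' S := by ext u; simp [hitP, Set.mem_setOf_eq, and_assoc]
  rw [this]
  exact hc.preimage_isClosed_of_isClosed isClosed_Icc hS

lemma hitP_bddAbove (p : ℝ → X) (ℓ : ℝ) (S : Set X) : BddAbove (hitP p ℓ S) :=
  bddAbove_Icc.mono (hitP_subset p ℓ S)

lemma hitP_bddBelow (p : ℝ → X) (ℓ : ℝ) (S : Set X) : BddBelow (hitP p ℓ S) :=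
  bddBelow_Icc.mono (hitP_subset p ℓ S)

lemma hitP_sInf_mem {p : ℝ → X} {ℓ : ℝ} {S : Set X} (hc : ContinuousOn p (Set.Icc 0 ℓ))
    (hS : IsClosed S) (hne : (hitP p ℓ S).Nonempty) : sInf (hitP p ℓ S) ∈ hitP p ℓ S :=
  (hitP_closed hc hS).csInf_mem hne (hitP_bddBelow p ℓ S)

lemma hitP_sSup_mem {p : ℝ → X} {ℓ : ℝ} {S : Set X} (hc : ContinuousOn p (Set.Icc 0 ℓ))
    (hS : IsClosed S) (hne : (hitP p ℓ S).Nonempty) : sSup (hitP p ℓ S) ∈ hitP p ℓ S :=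
  (hitP_closed hc hS).csSup_mem hne (hitP_bddAbove p ℓ S)

/-- sSup of the image under `x ↦ ℓ - x`. -/
lemma sSup_const_sub {ℓ : ℝ} {H : Set ℝ} (hne : H.Nonempty) (hb : BddBelow H) (hb' : BddAbove H) :
    sSup ((fun x => ℓ - x) '' H) = ℓ - sInf H := by
  have hbi : BddAbove ((fun x => ℓ - x) '' H) := by
    obtain ⟨m, hm⟩ := hb
    exact ⟨ℓ - m, by rintro y ⟨x, hx, rfl⟩; have := hm hx; simp; linarith⟩
  apply le_antisymm
  · apply csSup_le (hne.image _)
    rintro y ⟨x, hx, rfl⟩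
    have := csInf_le hb hx; dsimp only; linarith
  · have h1 : ∀ x ∈ H, ℓ - sSup ((fun x => ℓ - x) '' H) ≤ x := by
      intro x hx
      have := le_csSup hbi (Set.mem_image_of_mem _ hx)
      linarith
    have := le_csInf hne h1; linarith

lemma sInf_const_sub {ℓ : ℝ} {H : Set ℝ} (hne : H.Nonempty) (hb : BddBelow H) (hb' : BddAbove H) :
    sInf ((fun x => ℓ - x) '' H) = ℓ - sSup H := by
  have hbi : BddBelow ((fun x => ℓ - x) '' H) := by
    obtain ⟨m, hm⟩ := hb'
    exact ⟨ℓ - m, by rintro y ⟨x, hx, rfl⟩; have := hm hx; simp; linarith⟩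
  apply le_antisymm
  · have h1 : ∀ x ∈ H, x ≤ ℓ - sInf ((fun x => ℓ - x) '' H) := by
      intro x hx
      have := csInf_le hbi (Set.mem_image_of_mem _ hx)
      linarith
    have := csSup_le hne h1; linarith
  · apply le_csInf (hne.image _)
    rintro y ⟨x, hx, rfl⟩
    have := le_csSup hb' hx; dsimp only; linarith

lemma hitP_rev (p : ℝ → X) (ℓ : ℝ) (S : Set X) (hl : 0 ≤ ℓ) :
    hitP (fun u => p (ℓ - u)) ℓ S = (fun x => ℓ - x) '' hitP p ℓ S := by
  ext u
  constructor
  · rintro ⟨⟨h0, h1⟩, hS⟩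
    exact ⟨ℓ - u, ⟨⟨by linarith, by linarith⟩, hS⟩, by ring⟩
  · rintro ⟨x, ⟨⟨h0, h1⟩, hS⟩, rfl⟩
    refine ⟨⟨by dsimp only; linarith, by dsimp only; linarith⟩, by simpa [sub_sub_cancel] using hS⟩

lemma rev_exitPoint (p : ℝ → X) {ℓ : ℝ} (hl : 0 ≤ ℓ) (S : Set X)
    (hne : (hitP p ℓ S).Nonempty) :
    exitPoint (fun u => p (ℓ - u)) ℓ S = entrancePoint p ℓ S := by
  rw [exitPoint_eq, entrancePoint_eq, hitP_rev p ℓ S hl,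
    sSup_const_sub hne (hitP_bddBelow p ℓ S) (hitP_bddAbove p ℓ S)]
  norm_num

lemma rev_entrancePoint (p : ℝ → X) {ℓ : ℝ} (hl : 0 ≤ ℓ) (S : Set X)
    (hne : (hitP p ℓ S).Nonempty) :
    entrancePoint (fun u => p (ℓ - u)) ℓ S = exitPoint p ℓ S := by
  rw [exitPoint_eq, entrancePoint_eq, hitP_rev p ℓ S hl,
    sInf_const_sub hne (hitP_bddBelow p ℓ S) (hitP_bddAbove p ℓ S)]
  norm_num

end MyAux


section MyAux2
variable {X : Type*} [MetricSpace X] {𝓐 : Set (Set X)} {ε M : ℝ}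

lemma gap_core (hε0 : 0 < ε) (hM : 0 < M) (hα2 : Alpha2With 𝓐 ε M)
    {A : Set X} (hA : A ∈ 𝓐) {σ κ : ℝ} (hMσ : M ≤ σ) (hσκ : σ ≤ κ)
    (β : ℝ → X) (L : ℝ) (hβ : IsGeodesicParam β L)
    (h0 : Metric.infDist (β 0) A ≤ κ) (hL : Metric.infDist (β L) A ≤ σ + 1)
    (hall : ∀ u ∈ Set.Icc (0:ℝ) L, σ < Metric.infDist (β u) A) :
    L ≤ (κ + σ + 2) / ε := by
  by_contra hcon
  push_neg at hcon
  have hσ0 : 0 < σ := lt_of_lt_of_le hM hMσ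
  have hεL : κ + σ + 2 < ε * L := by
    rw [div_lt_iff₀ hε0] at hcon
    nlinarith
  obtain ⟨u, hu, hmem⟩ := hα2 β L hβ A hA
    (by show Metric.infDist (β 0) A < ε * L; linarith)
    (by show Metric.infDist (β L) A < ε * L; linarith)
  have h1 := hall u hu
  have h2 : Metric.infDist (β u) A < M := hmem
  linarith

/-- The σ-entrance and κ-entrance of a geodesic into tubes around `A` are close. -/
lemma entrance_lift (hε0 : 0 < ε) (hM : 0 < M) (hα2 : Alpha2With 𝓐 ε M)
    {A : Set X} (hA : A ∈ 𝓐) {σ κ : ℝ} (hMσ : M ≤ σ) (hσκ : σ ≤ κ)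
    {γ : ℝ → X} {ℓ : ℝ} (hγ : IsGeodesicParam γ ℓ)
    (hne : (hitP γ ℓ (ctubN σ A)).Nonempty) :
    dist (entrancePoint γ ℓ (ctubN κ A)) (entrancePoint γ ℓ (ctubN σ A))
      ≤ (κ + σ + 2) / ε + 1 := by
  have hσ0 : 0 < σ := lt_of_lt_of_le hM hMσ
  have hsub : hitP γ ℓ (ctubN σ A) ⊆ hitP γ ℓ (ctubN κ A) :=
    fun u hu => ⟨hu.1, ctubN_mono hσκ hu.2⟩
  have hneκ : (hitP γ ℓ (ctubN κ A)).Nonempty := hne.mono hsub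
  set s1 := sInf (hitP γ ℓ (ctubN κ A)) with hs1
  set s1' := sInf (hitP γ ℓ (ctubN σ A)) with hs1'
  have hm1 : s1 ∈ hitP γ ℓ (ctubN κ A) := hitP_sInf_mem hγ.cont (isClosed_ctubN κ A) hneκ
  have hm1' : s1' ∈ hitP γ ℓ (ctubN σ A) := hitP_sInf_mem hγ.cont (isClosed_ctubN σ A) hne
  have hle : s1 ≤ s1' := csInf_le_csInf (hitP_bddBelow _ _ _) hne hsub
  have hGnn : (0:ℝ) ≤ (κ + σ + 2) / ε := div_nonneg (by linarith) hε0.le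
  have key : s1' - s1 ≤ (κ + σ + 2) / ε + 1 := by
    rcases le_or_gt (s1' - s1) 1 with h | h
    · linarith
    · have hL : s1' - 1 - s1 ≤ (κ + σ + 2) / ε := by
        apply gap_core hε0 hM hα2 hA hMσ hσκ (fun u => γ (s1 + u)) (s1' - 1 - s1)
        · refine ⟨by linarith, fun a ha b hb => ?_⟩
          have h1 : s1 + a ∈ Set.Icc (0:ℝ) ℓ :=
            ⟨by have := hm1.1.1; linarith [ha.1], by have := hm1'.1.2; linarith [ha.2]⟩
          have h2 : s1 + b ∈ Set.Icc (0:ℝ) ℓ :=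
            ⟨by have := hm1.1.1; linarith [hb.1], by have := hm1'.1.2; linarith [hb.2]⟩
          rw [hγ.2 _ h1 _ h2]
          congr 1; ring
        · simpa using (show Metric.infDist (γ s1) A ≤ κ from hm1.2)
        · have h1 : s1 + (s1' - 1 - s1) = s1' - 1 := by ring
          rw [h1]
          have h2 : s1' - 1 ∈ Set.Icc (0:ℝ) ℓ :=
            ⟨by have := hm1.1.1; linarith, by have := hm1'.1.2; linarith⟩
          calc Metric.infDist (γ (s1' - 1)) A
              ≤ Metric.infDist (γ s1') A + dist (γ (s1' - 1)) (γ s1') :=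
                Metric.infDist_le_infDist_add_dist
            _ ≤ σ + 1 := by
                have hd : dist (γ (s1' - 1)) (γ s1') = |s1' - 1 - s1'| := hγ.2 _ h2 _ hm1'.1
                rw [hd]
                have : |s1' - 1 - s1'| = 1 := by rw [show s1' - 1 - s1' = -1 by ring]; simp
                rw [this]
                exact add_le_add_left (show Metric.infDist (γ s1') A ≤ σ from hm1'.2) 1
        · intro u hu
          by_contra hc
          push_neg at hc
          have hmem : s1 + u ∈ hitP γ ℓ (ctubN σ A) := by
            refine ⟨⟨by have := hm1.1.1; linarith [hu.1], by have := hm1'.1.2; linarith [hu.2]⟩, hc⟩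
          have := csInf_le (hitP_bddBelow γ ℓ (ctubN σ A)) hmem
          rw [← hs1'] at this
          linarith [hu.2]
      linarith
  rw [entrancePoint_eq, entrancePoint_eq, ← hs1, ← hs1',
    hγ.2 _ hm1.1 _ hm1'.1, abs_of_nonpos (by linarith)]
  linarith

/-- The σ-exit and κ-exit of a geodesic from tubes around `A` are close. -/
lemma exit_lift (hε0 : 0 < ε) (hM : 0 < M) (hα2 : Alpha2With 𝓐 ε M)
    {A : Set X} (hA : A ∈ 𝓐) {σ κ : ℝ} (hMσ : M ≤ σ) (hσκ : σ ≤ κ)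
    {γ : ℝ → X} {ℓ : ℝ} (hγ : IsGeodesicParam γ ℓ)
    (hne : (hitP γ ℓ (ctubN σ A)).Nonempty) :
    dist (exitPoint γ ℓ (ctubN κ A)) (exitPoint γ ℓ (ctubN σ A))
      ≤ (κ + σ + 2) / ε + 1 := by
  have hσ0 : 0 < σ := lt_of_lt_of_le hM hMσ
  have hsub : hitP γ ℓ (ctubN σ A) ⊆ hitP γ ℓ (ctubN κ A) :=
    fun u hu => ⟨hu.1, ctubN_mono hσκ hu.2⟩
  have hneκ : (hitP γ ℓ (ctubN κ A)).Nonempty := hne.mono hsub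
  set s2 := sSup (hitP γ ℓ (ctubN κ A)) with hs2
  set s2' := sSup (hitP γ ℓ (ctubN σ A)) with hs2'
  have hm2 : s2 ∈ hitP γ ℓ (ctubN κ A) := hitP_sSup_mem hγ.cont (isClosed_ctubN κ A) hneκ
  have hm2' : s2' ∈ hitP γ ℓ (ctubN σ A) := hitP_sSup_mem hγ.cont (isClosed_ctubN σ A) hne
  have hle : s2' ≤ s2 := csSup_le_csSup (hitP_bddAbove _ _ _) hne hsub
  have hGnn : (0:ℝ) ≤ (κ + σ + 2) / ε := div_nonneg (by linarith) hε0.le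
  have key : s2 - s2' ≤ (κ + σ + 2) / ε + 1 := by
    rcases le_or_gt (s2 - s2') 1 with h | h
    · linarith
    · have hL : s2 - (s2' + 1) ≤ (κ + σ + 2) / ε := by
        apply gap_core hε0 hM hα2 hA hMσ hσκ (fun u => γ (s2 - u)) (s2 - (s2' + 1))
        · refine ⟨by linarith, fun a ha b hb => ?_⟩
          have h1 : s2 - a ∈ Set.Icc (0:ℝ) ℓ :=
            ⟨by have := hm2'.1.1; linarith [ha.2], by have := hm2.1.2; linarith [ha.1]⟩
          have h2 : s2 - b ∈ Set.Icc (0:ℝ) ℓ :=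
            ⟨by have := hm2'.1.1; linarith [hb.2], by have := hm2.1.2; linarith [hb.1]⟩
          rw [hγ.2 _ h1 _ h2]
          rw [show s2 - a - (s2 - b) = -(a - b) by ring, abs_neg]
        · simpa using (show Metric.infDist (γ s2) A ≤ κ from hm2.2)
        · have h1 : s2 - (s2 - (s2' + 1)) = s2' + 1 := by ring
          rw [h1]
          have h2 : s2' + 1 ∈ Set.Icc (0:ℝ) ℓ :=
            ⟨by have := hm2'.1.1; linarith, by have := hm2.1.2; linarith⟩
          calc Metric.infDist (γ (s2' + 1)) A
              ≤ Metric.infDist (γ s2') A + dist (γ (s2' + 1)) (γ s2') :=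
                Metric.infDist_le_infDist_add_dist
            _ ≤ σ + 1 := by
                have hd : dist (γ (s2' + 1)) (γ s2') = |s2' + 1 - s2'| := hγ.2 _ h2 _ hm2'.1
                rw [hd, show s2' + 1 - s2' = 1 by ring]
                rw [abs_one]
                have hh : Metric.infDist (γ s2') A ≤ σ := hm2'.2
                linarith
        · intro u hu
          by_contra hc
          push_neg at hc
          have hmem : s2 - u ∈ hitP γ ℓ (ctubN σ A) := by
            refine ⟨⟨by have := hm2'.1.1; linarith [hu.2], by have := hm2.1.2; linarith [hu.1]⟩, hc⟩
          have := le_csSup (hitP_bddAbove γ ℓ (ctubN σ A)) hmem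
          rw [← hs2'] at this
          linarith [hu.2]
      linarith
  rw [exitPoint_eq, exitPoint_eq, ← hs2, ← hs2',
    hγ.2 _ hm2.1 _ hm2'.1, abs_of_nonneg (by linarith)]
  linarith

lemma entrance_restrict {p : ℝ → X} {ℓ t : ℝ} (ht : t ∈ Set.Icc 0 ℓ) {S : Set X}
    (hS : IsClosed S) (hc : ContinuousOn p (Set.Icc 0 ℓ))
    (hne : (hitP p t S).Nonempty) :
    entrancePoint p t S = entrancePoint p ℓ S := by
  have hsub : hitP p t S ⊆ hitP p ℓ S :=
    fun u hu => ⟨⟨hu.1.1, le_trans hu.1.2 ht.2⟩, hu.2⟩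
  have hne' : (hitP p ℓ S).Nonempty := hne.mono hsub
  have hc' : ContinuousOn p (Set.Icc 0 t) := hc.mono (Set.Icc_subset_Icc le_rfl ht.2)
  have h1 : sInf (hitP p ℓ S) ≤ sInf (hitP p t S) :=
    csInf_le_csInf (hitP_bddBelow _ _ _) hne hsub
  have hmt : sInf (hitP p t S) ∈ hitP p t S := hitP_sInf_mem hc' hS hne
  have hml : sInf (hitP p ℓ S) ∈ hitP p ℓ S := hitP_sInf_mem hc hS hne'
  have hml' : sInf (hitP p ℓ S) ∈ hitP p t S :=
    ⟨⟨hml.1.1, le_trans h1 hmt.1.2⟩, hml.2⟩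
  have h2 : sInf (hitP p t S) ≤ sInf (hitP p ℓ S) :=
    csInf_le (hitP_bddBelow _ _ _) hml'
  rw [entrancePoint_eq, entrancePoint_eq, le_antisymm h1 h2]

lemma exit_of_endpoint_mem {γ : ℝ → X} {ℓ : ℝ} (hl : 0 ≤ ℓ) {S : Set X} (hS : γ ℓ ∈ S) :
    exitPoint γ ℓ S = γ ℓ := by
  have hmem : ℓ ∈ hitP γ ℓ S := ⟨⟨hl, le_rfl⟩, hS⟩
  have h1 : sSup (hitP γ ℓ S) ≤ ℓ := csSup_le ⟨ℓ, hmem⟩ (fun x hx => hx.1.2)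
  have h2 : ℓ ≤ sSup (hitP γ ℓ S) := le_csSup (hitP_bddAbove _ _ _) hmem
  rw [exitPoint_eq, le_antisymm h1 h2]

end MyAux2

/-- **Lemma.** Let `X` be geodesic and `(*)`-ATG with respect to `𝓐` (with the constant
`σ` always at least the constant `M` of (α₂)), and assume (α₂).  Then for every `C ≥ 0`
there are `κ, lam ≥ 0` such that for any two geodesics `γ, γ'` with common origin and
endpoints at distance at most `C`, every point of `γ'` either lies in the closed
`κ`-neighborhood of `γ`, or lies in the closed `κ`-neighborhood of some `A ∈ 𝓐` whose
closed `κ`-neighborhood meets `γ`; and in the latter case the entrance points (resp.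
exit points) of `γ` and `γ'` in that neighborhood are at distance at most `lam`. -/
theorem geodesics_with_close_endpoints (hX : GeodesicSpace X) (𝓐 : Set (Set X))
    (ε M : ℝ) (hε0 : 0 < ε) (hε : ε < 1/2) (hM : 0 < M)
    (hα2 : Alpha2With 𝓐 ε M)
    (hstar : ∀ C : ℝ, 0 ≤ C → ∃ σ δ : ℝ, M ≤ σ ∧ StarATGWith 𝓐 C σ δ) :
    ∀ C : ℝ, 0 ≤ C → ∃ κ : ℝ, 0 ≤ κ ∧ ∃ lam : ℝ, 0 ≤ lam ∧
      ∀ (γ : ℝ → X) (ℓ : ℝ), IsGeodesicParam γ ℓ →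
      ∀ (γ' : ℝ → X) (ℓ' : ℝ), IsGeodesicParam γ' ℓ' →
      γ 0 = γ' 0 → dist (γ ℓ) (γ' ℓ') ≤ C →
      ∀ z ∈ γ' '' Set.Icc (0:ℝ) ℓ',
        z ∈ ctubN κ (γ '' Set.Icc (0:ℝ) ℓ) ∨
        ∃ A ∈ 𝓐, z ∈ ctubN κ A ∧ (∃ s ∈ Set.Icc (0:ℝ) ℓ, γ s ∈ ctubN κ A) ∧
          dist (entrancePoint γ ℓ (ctubN κ A)) (entrancePoint γ' ℓ' (ctubN κ A)) ≤ lam ∧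
          dist (exitPoint γ ℓ (ctubN κ A)) (exitPoint γ' ℓ' (ctubN κ A)) ≤ lam := by
  intro C hC
  obtain ⟨σ, δ, hMσ, hstarC⟩ := hstar (2 * C) (by linarith)
  have hσ0 : 0 < σ := lt_of_lt_of_le hM hMσ
  set δ' : ℝ := max δ 0 with hδ'
  have hδ'0 : 0 ≤ δ' := le_max_right _ _
  have hδδ' : δ ≤ δ' := le_max_left _ _
  set κ : ℝ := 5 * σ + δ' + 4 * C with hκdef
  have hκ0 : 0 < κ := by linarith
  have hσκ : σ ≤ κ := by linarith
  set G : ℝ := (κ + σ + 2) / ε + 1 with hGdef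
  have hG0 : 0 ≤ G := by
    have h : (0:ℝ) ≤ (κ + σ + 2) / ε := div_nonneg (by linarith) hε0.le
    rw [hGdef]; linarith
  set lam : ℝ := 2 * G + δ' + C with hlamdef
  refine ⟨κ, by linarith, lam, by linarith, ?_⟩
  intro γ ℓ hγ γ' ℓ' hγ' hx hend z hz
  obtain ⟨t, ht, rfl⟩ := hz
  obtain ⟨g, lg, hg, hg0, hg1⟩ := hX (γ' ℓ') (γ ℓ)
  have hl0 : 0 ≤ ℓ := hγ.1
  have hl'0 : 0 ≤ ℓ' := hγ'.1
  have hlg0 : 0 ≤ lg := hg.1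
  have hlgC : lg ≤ C := by
    have h1 := hg.2 0 ⟨le_rfl, hlg0⟩ lg ⟨hlg0, le_rfl⟩
    rw [hg0, hg1] at h1
    have h2 : |0 - lg| = lg := by rw [abs_of_nonpos (by linarith)]; ring
    rw [h2] at h1
    rw [← h1]
    rw [dist_comm]
    exact hend
  have ht0 : 0 ≤ t := ht.1
  have htl : t ≤ ℓ' := ht.2
  set j : ℝ := ℓ' - t with hjdef
  have hj0 : 0 ≤ j := by rw [hjdef]; linarith
  set q : ℝ → X := fun u => if u < j then γ' (t + u) else g (u - j) with hqdef
  set L1 : ℝ := j + lg with hL1def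
  have hL10 : 0 ≤ L1 := by rw [hL1def]; linarith
  have hqeq1 : ∀ a, 0 ≤ a → a ≤ j → q a = γ' (t + a) := by
    intro a ha0 haj
    rcases lt_or_eq_of_le haj with h | h
    · simp only [hqdef, if_pos h]
    · subst h
      simp only [hqdef, if_neg (lt_irrefl j), sub_self]
      rw [hg0]
      congr 1
      rw [hjdef]; ring
  have hqeq2 : ∀ a, j ≤ a → q a = g (a - j) := by
    intro a ha
    simp only [hqdef, if_neg (not_lt.mpr ha)]
  -- distance estimates for q
  have qdist : ∀ a b, 0 ≤ a → a ≤ b → b ≤ L1 →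
      dist (q a) (q b) ≤ b - a ∧ b - a - 2 * C ≤ dist (q a) (q b) := by
    intro a b ha0 hab hbL
    rcases le_or_gt b j with hbj | hbj
    · rw [hqeq1 a ha0 (le_trans hab hbj), hqeq1 b (le_trans ha0 hab) hbj]
      have hit : t + a ∈ Set.Icc (0:ℝ) ℓ' := ⟨by linarith, by rw [hjdef] at hbj; linarith⟩
      have hit' : t + b ∈ Set.Icc (0:ℝ) ℓ' := ⟨by linarith, by rw [hjdef] at hbj; linarith⟩
      have hd := hγ'.2 _ hit _ hit'
      rw [hd, show t + a - (t + b) = -(b - a) by ring, abs_neg, abs_of_nonneg (by linarith)]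
      constructor
      · exact le_rfl
      · linarith
    · rcases le_or_gt a j with haj | haj
      · rw [hqeq1 a ha0 haj, hqeq2 b hbj.le]
        have hia : t + a ∈ Set.Icc (0:ℝ) ℓ' := ⟨by linarith, by rw [hjdef] at haj; linarith⟩
        have hil : ℓ' ∈ Set.Icc (0:ℝ) ℓ' := ⟨hl'0, le_rfl⟩
        have hd1 : dist (γ' (t + a)) (γ' ℓ') = j - a := by
          rw [hγ'.2 _ hia _ hil, show t + a - ℓ' = -(j - a) by rw [hjdef]; ring, abs_neg,
            abs_of_nonneg (by linarith)]
        have hbjL : b - j ∈ Set.Icc (0:ℝ) lg := ⟨by linarith, by rw [hL1def] at hbL; linarith⟩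
        have hd2 : dist (γ' ℓ') (g (b - j)) = b - j := by
          rw [← hg0, hg.2 0 ⟨le_rfl, hlg0⟩ _ hbjL, show 0 - (b - j) = -(b - j) by ring, abs_neg,
            abs_of_nonneg (by linarith)]
        constructor
        · calc dist (γ' (t + a)) (g (b - j)) ≤
              dist (γ' (t + a)) (γ' ℓ') + dist (γ' ℓ') (g (b - j)) := dist_triangle _ _ _
            _ = (j - a) + (b - j) := by rw [hd1, hd2]
            _ = b - a := by ring
        · have h3 : dist (γ' (t + a)) (γ' ℓ') ≤ dist (γ' (t + a)) (g (b - j)) + dist (γ' ℓ') (g (b - j)) := by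
            calc dist (γ' (t + a)) (γ' ℓ') ≤
                dist (γ' (t + a)) (g (b - j)) + dist (g (b - j)) (γ' ℓ') := dist_triangle _ _ _
              _ = dist (γ' (t + a)) (g (b - j)) + dist (γ' ℓ') (g (b - j)) := by rw [dist_comm (g (b-j))]
          have hbjc : b - j ≤ C := le_trans hbjL.2 hlgC
          rw [hd1] at h3
          rw [hd2] at h3
          linarith
      · rw [hqeq2 a haj.le, hqeq2 b hbj.le]
        have hia : a - j ∈ Set.Icc (0:ℝ) lg := ⟨by linarith, by rw [hL1def] at hbL; linarith⟩
        have hib : b - j ∈ Set.Icc (0:ℝ) lg := ⟨by linarith, by rw [hL1def] at hbL; linarith⟩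
        rw [hg.2 _ hia _ hib, show a - j - (b - j) = -(b - a) by ring, abs_neg,
          abs_of_nonneg (by linarith)]
        exact ⟨le_rfl, by linarith⟩
  have hqcont : ContinuousOn q (Set.Icc 0 L1) := by
    apply cont_of_bound
    intro s hs u hu
    rcases le_total s u with h | h
    · rw [abs_of_nonpos (by linarith)]
      have := (qdist s u hs.1 h hu.2).1
      linarith
    · rw [abs_of_nonneg (by linarith), dist_comm]
      have := (qdist u s hu.1 h hs.2).1
      linarith
  -- the triangle
  set T : PrePolygon X 3 := ⟨![γ', q, fun u => γ (ℓ - u)], ![t, L1, ℓ]⟩ with hT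
  have hTclosed : T.IsClosedPolygon := by
    constructor
    · intro i
      fin_cases i
      · exact ht0
      · exact hL10
      · exact hl0
    · intro i
      fin_cases i
      · show γ' t = q 0
        rw [hqeq1 0 le_rfl hj0, add_zero]
      · show q L1 = γ (ℓ - 0)
        rw [hqeq2 L1 (by rw [hL1def]; linarith), hL1def, add_sub_cancel_left, hg1, sub_zero]
      · show γ (ℓ - ℓ) = γ' 0
        rw [sub_self, hx]
  have hTedges : ∀ i, IsAlmostGeodesic (2 * C) (T.edge i) (T.len i) := by
    intro i
    fin_cases i
    · show IsAlmostGeodesic (2 * C) γ' t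
      refine ⟨ht0, fun s hs u hu => ?_⟩
      have hs' : s ∈ Set.Icc (0:ℝ) ℓ' := ⟨hs.1, le_trans hs.2 htl⟩
      have hu' : u ∈ Set.Icc (0:ℝ) ℓ' := ⟨hu.1, le_trans hu.2 htl⟩
      have hd := hγ'.2 s hs' u hu'
      show |s - u| - 2 * C ≤ dist (γ' s) (γ' u) ∧ dist (γ' s) (γ' u) ≤ |s - u|
      rw [hd]
      exact ⟨by linarith, le_rfl⟩
    · show IsAlmostGeodesic (2 * C) q L1
      refine ⟨hL10, fun s hs u hu => ?_⟩
      show |s - u| - 2 * C ≤ dist (q s) (q u) ∧ dist (q s) (q u) ≤ |s - u|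
      rcases le_total s u with h | h
      · obtain ⟨h1, h2⟩ := qdist s u hs.1 h hu.2
        rw [abs_of_nonpos (by linarith)]
        exact ⟨by linarith, by linarith⟩
      · obtain ⟨h1, h2⟩ := qdist u s hu.1 h hs.2
        rw [abs_of_nonneg (by linarith), dist_comm]
        exact ⟨by linarith, by linarith⟩
    · show IsAlmostGeodesic (2 * C) (fun u => γ (ℓ - u)) ℓ
      refine ⟨hl0, fun s hs u hu => ?_⟩
      have hs' : ℓ - s ∈ Set.Icc (0:ℝ) ℓ := ⟨by linarith [hs.2], by linarith [hs.1]⟩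
      have hu' : ℓ - u ∈ Set.Icc (0:ℝ) ℓ := ⟨by linarith [hu.2], by linarith [hu.1]⟩
      have hd := hγ.2 _ hs' _ hu'
      show |s - u| - 2 * C ≤ dist (γ (ℓ - s)) (γ (ℓ - u)) ∧
        dist (γ (ℓ - s)) (γ (ℓ - u)) ≤ |s - u|
      rw [hd, show ℓ - s - (ℓ - u) = -(s - u) by ring, abs_neg]
      exact ⟨by linarith, le_rfl⟩
  rcases hstarC T hTclosed hTedges with ⟨a, ha⟩ | ⟨A, hA𝓐, hne, hdists⟩
  · -- Case (ℭ): z is κ-close to γ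
    left
    obtain ⟨y0, hy0b, hy0e⟩ := ha 0
    obtain ⟨t₁, ht₁, rfl⟩ := (show ∃ u ∈ Set.Icc (0:ℝ) t, γ' u = y0 from hy0e)
    obtain ⟨y1, hy1b, hy1e⟩ := ha 1
    obtain ⟨v, hv, rfl⟩ := (show ∃ u ∈ Set.Icc (0:ℝ) L1, q u = y1 from hy1e)
    obtain ⟨y2, hy2b, hy2e⟩ := ha 2
    obtain ⟨u, hu, rfl⟩ := (show ∃ w ∈ Set.Icc (0:ℝ) ℓ, γ (ℓ - w) = y2 from hy2e)
    rw [Metric.mem_closedBall] at hy0b hy1b hy2b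
    have hmem : γ (ℓ - u) ∈ γ '' Set.Icc (0:ℝ) ℓ :=
      ⟨ℓ - u, ⟨by linarith [hu.2], by linarith [hu.1]⟩, rfl⟩
    have htt1 : dist (γ' t) (γ' t₁) = t - t₁ := by
      rw [hγ'.2 t ht t₁ ⟨ht₁.1, le_trans ht₁.2 htl⟩, abs_of_nonneg (by linarith [ht₁.2])]
    have hkey : t - t₁ ≤ 2 * σ + C := by
      rcases le_or_gt v j with hvj | hvj
      · have hq1 : q v = γ' (t + v) := hqeq1 v hv.1 hvj
        have hd : dist (γ' t₁) (γ' (t + v)) = t + v - t₁ := by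
          rw [hγ'.2 t₁ ⟨ht₁.1, le_trans ht₁.2 htl⟩ (t + v) ⟨by linarith [hv.1], by
              rw [hjdef] at hvj; linarith⟩, show t₁ - (t + v) = -(t + v - t₁) by ring, abs_neg,
            abs_of_nonneg (by linarith [ht₁.2, hv.1])]
        have : dist (γ' t₁) (γ' (t + v)) ≤ 2 * σ := by
          calc dist (γ' t₁) (γ' (t + v)) ≤ dist (γ' t₁) a + dist a (γ' (t + v)) := dist_triangle _ _ _
            _ ≤ σ + σ := by
                rw [← hq1]
                refine add_le_add hy0b ?_
                rw [dist_comm]; exact hy1b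
            _ = 2 * σ := by ring
        rw [hd] at this
        linarith [hv.1]
      · have hq2 : q v = g (v - j) := hqeq2 v hvj.le
        have hvlg : v - j ∈ Set.Icc (0:ℝ) lg := ⟨by linarith, by rw [hL1def] at hv; linarith [hv.2]⟩
        have hd2 : dist (q v) (γ' ℓ') = v - j := by
          rw [hq2, ← hg0, hg.2 _ hvlg 0 ⟨le_rfl, hlg0⟩, sub_zero, abs_of_nonneg (by linarith)]
        have hd3 : dist (γ' t₁) (γ' ℓ') = ℓ' - t₁ := by
          rw [hγ'.2 t₁ ⟨ht₁.1, le_trans ht₁.2 htl⟩ ℓ' ⟨hl'0, le_rfl⟩,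
            show t₁ - ℓ' = -(ℓ' - t₁) by ring, abs_neg, abs_of_nonneg (by linarith [ht₁.2])]
      -- ℓ' - t₁ ≤ 2σ + (v - j) ≤ 2σ + C
        have : ℓ' - t₁ ≤ 2 * σ + C := by
          have h4 : dist (γ' t₁) (γ' ℓ') ≤ dist (γ' t₁) a + dist a (q v) + dist (q v) (γ' ℓ') :=
            dist_triangle4 _ _ _ _
          rw [hd3, hd2] at h4
          have h5 : dist a (q v) ≤ σ := by rw [dist_comm]; exact hy1b
          have h6 : v - j ≤ C := le_trans hvlg.2 hlgC
          linarith [hy0b]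
        linarith [ht₁.2]
    show Metric.infDist (γ' t) (γ '' Set.Icc (0:ℝ) ℓ) ≤ κ
    calc Metric.infDist (γ' t) (γ '' Set.Icc (0:ℝ) ℓ) ≤ dist (γ' t) (γ (ℓ - u)) :=
        Metric.infDist_le_dist_of_mem hmem
      _ ≤ dist (γ' t) (γ' t₁) + dist (γ' t₁) a + dist a (γ (ℓ - u)) := dist_triangle4 _ _ _ _
      _ ≤ (2 * σ + C) + σ + σ := by
          rw [htt1]
          refine add_le_add (add_le_add hkey hy0b) ?_
          rw [dist_comm]; exact hy2b
      _ ≤ κ := by rw [hκdef]; linarith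
  · -- Case (𝔓)
    right
    have hγ'contt : ContinuousOn γ' (Set.Icc 0 t) := hγ'.cont.mono (Set.Icc_subset_Icc le_rfl htl)
    have hne0 : (hitP γ' t (ctubN σ A)).Nonempty := by
      obtain ⟨y, hy1, hy2⟩ := hne 0
      obtain ⟨u, hu, rfl⟩ := (show ∃ u ∈ Set.Icc (0:ℝ) t, γ' u = y from hy2)
      exact ⟨u, hu, hy1⟩
    have hne1 : (hitP q L1 (ctubN σ A)).Nonempty := by
      obtain ⟨y, hy1, hy2⟩ := hne 1
      obtain ⟨u, hu, rfl⟩ := (show ∃ u ∈ Set.Icc (0:ℝ) L1, q u = y from hy2)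
      exact ⟨u, hu, hy1⟩
    have hne2 : (hitP γ ℓ (ctubN σ A)).Nonempty := by
      obtain ⟨y, hy1, hy2⟩ := hne 2
      obtain ⟨u, hu, rfl⟩ := (show ∃ u ∈ Set.Icc (0:ℝ) ℓ, γ (ℓ - u) = y from hy2)
      exact ⟨ℓ - u, ⟨by linarith [hu.2], by linarith [hu.1]⟩, hy1⟩
    have hne0' : (hitP γ' ℓ' (ctubN σ A)).Nonempty :=
      hne0.mono (fun u hu => ⟨⟨hu.1.1, le_trans hu.1.2 htl⟩, hu.2⟩)
    have hd0 : dist (exitPoint γ' t (ctubN σ A)) (entrancePoint q L1 (ctubN σ A)) < δ := hdists 0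
    have hd1 : dist (exitPoint q L1 (ctubN σ A))
        (entrancePoint (fun u => γ (ℓ - u)) ℓ (ctubN σ A)) < δ := hdists 1
    have hd2 : dist (exitPoint (fun u => γ (ℓ - u)) ℓ (ctubN σ A))
        (entrancePoint γ' t (ctubN σ A)) < δ := hdists 2
    rw [rev_exitPoint γ hl0 _ hne2, entrance_restrict ht (isClosed_ctubN σ A) hγ'.cont hne0] at hd2
    rw [rev_entrancePoint γ hl0 _ hne2, exitPoint_eq q L1] at hd1
    rw [exitPoint_eq γ' t, entrancePoint_eq q L1] at hd0
    set τ₀ := sSup (hitP γ' t (ctubN σ A)) with hτ₀def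
    have hτ₀mem : τ₀ ∈ hitP γ' t (ctubN σ A) :=
      hitP_sSup_mem hγ'contt (isClosed_ctubN σ A) hne0
    set v₀ := sInf (hitP q L1 (ctubN σ A)) with hv₀def
    have hv₀mem : v₀ ∈ hitP q L1 (ctubN σ A) :=
      hitP_sInf_mem hqcont (isClosed_ctubN σ A) hne1
    set v₁ := sSup (hitP q L1 (ctubN σ A)) with hv₁def
    have hv₁mem : v₁ ∈ hitP q L1 (ctubN σ A) :=
      hitP_sSup_mem hqcont (isClosed_ctubN σ A) hne1
    have hτ₀t : τ₀ ≤ t := hτ₀mem.1.2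
    have hτ₀0 : 0 ≤ τ₀ := hτ₀mem.1.1
    refine ⟨A, hA𝓐, ?_, ?_, ?_, ?_⟩
    · -- z = γ' t is κ-close to A
      have hσt : Metric.infDist (γ' τ₀) A ≤ σ := hτ₀mem.2
      have hbound : t - τ₀ ≤ δ + C := by
        rcases le_or_gt v₀ j with hvj | hvj
        · have hq1 : q v₀ = γ' (t + v₀) := hqeq1 v₀ hv₀mem.1.1 hvj
          rw [hq1] at hd0
          have hdd : dist (γ' τ₀) (γ' (t + v₀)) = t + v₀ - τ₀ := by
            rw [hγ'.2 τ₀ ⟨hτ₀0, le_trans hτ₀t htl⟩ (t + v₀)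
                ⟨by linarith [hv₀mem.1.1], by rw [hjdef] at hvj; linarith⟩,
              show τ₀ - (t + v₀) = -(t + v₀ - τ₀) by ring, abs_neg,
              abs_of_nonneg (by linarith [hv₀mem.1.1])]
          rw [hdd] at hd0
          linarith [hv₀mem.1.1]
        · have hq2 : q v₀ = g (v₀ - j) := hqeq2 v₀ hvj.le
          have hvlg : v₀ - j ∈ Set.Icc (0:ℝ) lg :=
            ⟨by linarith, by have := hv₀mem.1.2; rw [hL1def] at this; linarith⟩
          have hdq : dist (q v₀) (γ' ℓ') = v₀ - j := by
            rw [hq2, ← hg0, hg.2 _ hvlg 0 ⟨le_rfl, hlg0⟩, sub_zero,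
              abs_of_nonneg (by linarith)]
          have hd3 : dist (γ' τ₀) (γ' ℓ') = ℓ' - τ₀ := by
            rw [hγ'.2 τ₀ ⟨hτ₀0, le_trans hτ₀t htl⟩ ℓ' ⟨hl'0, le_rfl⟩,
              show τ₀ - ℓ' = -(ℓ' - τ₀) by ring, abs_neg,
              abs_of_nonneg (by linarith [le_trans hτ₀t htl])]
          have h4 : dist (γ' τ₀) (γ' ℓ') ≤ dist (γ' τ₀) (q v₀) + dist (q v₀) (γ' ℓ') :=
            dist_triangle _ _ _
          rw [hd3, hdq] at h4
          have h6 : v₀ - j ≤ C := le_trans hvlg.2 hlgC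
          linarith
      have hdistt : dist (γ' t) (γ' τ₀) = t - τ₀ := by
        rw [hγ'.2 t ht τ₀ ⟨hτ₀0, le_trans hτ₀t htl⟩, abs_of_nonneg (by linarith)]
      show Metric.infDist (γ' t) A ≤ κ
      calc Metric.infDist (γ' t) A ≤ Metric.infDist (γ' τ₀) A + dist (γ' t) (γ' τ₀) :=
          Metric.infDist_le_infDist_add_dist
        _ ≤ σ + (δ + C) := by rw [hdistt]; exact add_le_add hσt hbound
        _ ≤ κ := by rw [hκdef]; linarith
    · -- γ meets the κ-tube
      obtain ⟨s, hs, hmem⟩ := hne2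
      exact ⟨s, hs, ctubN_mono hσκ hmem⟩
    · -- entrance points
      have hliftγ := entrance_lift hε0 hM hα2 hA𝓐 hMσ hσκ hγ hne2
      have hliftγ' := entrance_lift hε0 hM hα2 hA𝓐 hMσ hσκ hγ' hne0'
      calc dist (entrancePoint γ ℓ (ctubN κ A)) (entrancePoint γ' ℓ' (ctubN κ A))
          ≤ dist (entrancePoint γ ℓ (ctubN κ A)) (entrancePoint γ ℓ (ctubN σ A)) +
            dist (entrancePoint γ ℓ (ctubN σ A)) (entrancePoint γ' ℓ' (ctubN σ A)) +
            dist (entrancePoint γ' ℓ' (ctubN σ A)) (entrancePoint γ' ℓ' (ctubN κ A)) :=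
            dist_triangle4 _ _ _ _
        _ ≤ G + δ + G := by
            refine add_le_add (add_le_add ?_ hd2.le) ?_
            · rw [hGdef]; exact hliftγ
            · rw [dist_comm, hGdef]; exact hliftγ'
        _ ≤ lam := by rw [hlamdef]; linarith
    · -- exit points
      rcases le_or_gt v₁ j with hvj | hvj
      · have hq1 : q v₁ = γ' (t + v₁) := hqeq1 v₁ hv₁mem.1.1 hvj
        have hmem' : t + v₁ ∈ hitP γ' ℓ' (ctubN σ A) :=
          ⟨⟨by linarith [hv₁mem.1.1], by rw [hjdef] at hvj; linarith⟩,
            by rw [← hq1]; exact hv₁mem.2⟩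
        have hsup : sSup (hitP γ' ℓ' (ctubN σ A)) = t + v₁ := by
          apply le_antisymm
          · apply csSup_le hne0'
            intro w hw
            by_contra hcw
            push_neg at hcw
            have hwt : w - t ≤ j := by rw [hjdef]; linarith [hw.1.2]
            have hwq : w - t ∈ hitP q L1 (ctubN σ A) := by
              refine ⟨⟨by linarith [hv₁mem.1.1], by rw [hL1def]; linarith⟩, ?_⟩
              rw [hqeq1 (w - t) (by linarith [hv₁mem.1.1]) hwt,
                show t + (w - t) = w by ring]
              exact hw.2
            have hle := le_csSup (hitP_bddAbove q L1 (ctubN σ A)) hwq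
            rw [← hv₁def] at hle
            linarith
          · exact le_csSup (hitP_bddAbove _ _ _) hmem'
        have hexitγ' : exitPoint γ' ℓ' (ctubN σ A) = q v₁ := by
          rw [exitPoint_eq, hsup, ← hq1]
        have hliftγ := exit_lift hε0 hM hα2 hA𝓐 hMσ hσκ hγ hne2
        have hliftγ' := exit_lift hε0 hM hα2 hA𝓐 hMσ hσκ hγ' hne0'
        have hd1' : dist (exitPoint γ' ℓ' (ctubN σ A)) (exitPoint γ ℓ (ctubN σ A)) < δ := by
          rw [hexitγ']; exact hd1
        calc dist (exitPoint γ ℓ (ctubN κ A)) (exitPoint γ' ℓ' (ctubN κ A))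
            ≤ dist (exitPoint γ ℓ (ctubN κ A)) (exitPoint γ ℓ (ctubN σ A)) +
              dist (exitPoint γ ℓ (ctubN σ A)) (exitPoint γ' ℓ' (ctubN σ A)) +
              dist (exitPoint γ' ℓ' (ctubN σ A)) (exitPoint γ' ℓ' (ctubN κ A)) :=
              dist_triangle4 _ _ _ _
          _ ≤ G + δ + G := by
              refine add_le_add (add_le_add ?_ ?_) ?_
              · rw [hGdef]; exact hliftγ
              · rw [dist_comm]; exact hd1'.le
              · rw [dist_comm, hGdef]; exact hliftγ'
          _ ≤ lam := by rw [hlamdef]; linarith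
      · have hq2 : q v₁ = g (v₁ - j) := hqeq2 v₁ hvj.le
        have hvlg : v₁ - j ∈ Set.Icc (0:ℝ) lg :=
          ⟨by linarith, by have := hv₁mem.1.2; rw [hL1def] at this; linarith⟩
        have hdq' : dist (q v₁) (γ' ℓ') = v₁ - j := by
          rw [hq2, ← hg0, hg.2 _ hvlg 0 ⟨le_rfl, hlg0⟩, sub_zero, abs_of_nonneg (by linarith)]
        have hdq2 : dist (q v₁) (γ ℓ) = lg - (v₁ - j) := by
          rw [hq2, ← hg1, hg.2 _ hvlg lg ⟨hlg0, le_rfl⟩,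
            show v₁ - j - lg = -(lg - (v₁ - j)) by ring, abs_neg,
            abs_of_nonneg (by linarith [hvlg.2])]
        have hσv : Metric.infDist (q v₁) A ≤ σ := hv₁mem.2
        have hendγ : γ ℓ ∈ ctubN κ A := by
          show Metric.infDist (γ ℓ) A ≤ κ
          calc Metric.infDist (γ ℓ) A ≤ Metric.infDist (q v₁) A + dist (γ ℓ) (q v₁) :=
              Metric.infDist_le_infDist_add_dist
            _ ≤ σ + C := by
                rw [dist_comm, hdq2]
                have : lg - (v₁ - j) ≤ C := by linarith [hvlg.1, hlgC]
                exact add_le_add hσv this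
            _ ≤ κ := by rw [hκdef]; linarith
        have hendγ' : γ' ℓ' ∈ ctubN κ A := by
          show Metric.infDist (γ' ℓ') A ≤ κ
          calc Metric.infDist (γ' ℓ') A ≤ Metric.infDist (q v₁) A + dist (γ' ℓ') (q v₁) :=
              Metric.infDist_le_infDist_add_dist
            _ ≤ σ + C := by
                rw [dist_comm, hdq']
                have : v₁ - j ≤ C := le_trans hvlg.2 hlgC
                exact add_le_add hσv this
            _ ≤ κ := by rw [hκdef]; linarith
        rw [exit_of_endpoint_mem hl0 hendγ, exit_of_endpoint_mem hl'0 hendγ']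
        calc dist (γ ℓ) (γ' ℓ') ≤ C := hend
          _ ≤ lam := by rw [hlamdef]; linarith
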